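/- For all real numbers M > 1, α > 1, and β with 0 < β < 1: (1/2)·ln((M − 1)/(M + 1)) + (1/(2√M))·ln((√M + 1)/(√M − 1)) > β² / (6·α·M²). -/

import Mathlib

open Real Set

lemma log_le_cubic {t : ℝ} (ht : 0 ≤ t) :
    Real.log (1 + t) ≤ t - t ^ 2 / 2 + t ^ 3 / 3 := by
  set f : ℝ → ℝ := fun y => y - y ^ 2 / 2 + y ^ 3 / 3 - Real.log (1 + y) with hf
  have hd : ∀ y : ℝ, 0 < y → HasDerivAt f (1 - y + y ^ 2 - 1 / (1 + y)) y := by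
    intro y hy
    have h1 : HasDerivAt (fun z : ℝ => 1 + z) 1 y := by
      simpa using (hasDerivAt_id y).const_add 1
    have hlog : HasDerivAt (fun z : ℝ => Real.log (1 + z)) (1 / (1 + y)) y := by
      simpa using h1.log (by linarith)
    have hpoly : HasDerivAt (fun z : ℝ => z - z ^ 2 / 2 + z ^ 3 / 3) (1 - y + y ^ 2) y := by
      have := ((hasDerivAt_id y).sub ((hasDerivAt_pow 2 y).div_const 2)).add
        ((hasDerivAt_pow 3 y).div_const 3)
      refine this.congr_deriv ?_
      ring
    exact hpoly.sub hlog
  have hmono : MonotoneOn f (Ici (0 : ℝ)) := by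
    apply monotoneOn_of_deriv_nonneg (convex_Ici 0)
    · apply ContinuousOn.sub (by fun_prop)
      apply ContinuousOn.log (by fun_prop)
      intro z hz h
      rw [mem_Ici] at hz
      linarith
    · intro z hz
      rw [interior_Ici] at hz
      have hz' : 0 < z := hz
      exact (hd z hz').differentiableAt.differentiableWithinAt
    · intro z hz
      rw [interior_Ici] at hz
      have hz' : 0 < z := hz
      rw [(hd z hz').deriv]
      have h1 : (0:ℝ) < 1 + z := by linarith
      have heq : 1 - z + z ^ 2 - 1 / (1 + z) = z ^ 3 / (1 + z) := by
        field_simp; try ring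
      rw [heq]
      exact le_of_lt (div_pos (pow_pos hz' 3) h1)
  have h00 : f 0 = 0 := by norm_num [hf]
  have := hmono self_mem_Ici (mem_Ici.2 ht) ht
  rw [h00] at this
  simp only [hf] at this
  linarith

lemma artanh_ge {x : ℝ} (h0 : 0 ≤ x) (h1 : x < 1) :
    x + x ^ 3 / 3 ≤ 1 / 2 * (Real.log (1 + x) - Real.log (1 - x)) := by
  set f : ℝ → ℝ := fun y => 1 / 2 * (Real.log (1 + y) - Real.log (1 - y)) - (y + y ^ 3 / 3)
    with hf
  have hd : ∀ y : ℝ, 0 < y → y < 1 →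
      HasDerivAt f (1 / 2 * (1 / (1 + y) + 1 / (1 - y)) - (1 + y ^ 2)) y := by
    intro y hy hy1
    have h1 : HasDerivAt (fun z : ℝ => 1 + z) 1 y := by
      simpa using (hasDerivAt_id y).const_add 1
    have h2 : HasDerivAt (fun z : ℝ => 1 - z) (-1) y := by
      simpa using (hasDerivAt_id y).const_sub 1
    have hlog1 : HasDerivAt (fun z : ℝ => Real.log (1 + z)) (1 / (1 + y)) y := by
      simpa using h1.log (by linarith)
    have hlog2 : HasDerivAt (fun z : ℝ => Real.log (1 - z)) (-1 / (1 - y)) y := by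
      simpa using h2.log (by intro h; linarith)
    have hpoly : HasDerivAt (fun z : ℝ => z + z ^ 3 / 3) (1 + y ^ 2) y := by
      have := (hasDerivAt_id y).add ((hasDerivAt_pow 3 y).div_const 3)
      refine this.congr_deriv ?_; ring
    have := ((hlog1.sub hlog2).const_mul (1/2 : ℝ)).sub hpoly
    refine this.congr_deriv ?_
    field_simp
    ring
  have hmono : MonotoneOn f (Ico (0 : ℝ) 1) := by
    apply monotoneOn_of_deriv_nonneg (convex_Ico 0 1)
    · have c1 : ContinuousOn (fun z : ℝ => Real.log (1 + z)) (Ico (0:ℝ) 1) := by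
        apply ContinuousOn.log (by fun_prop)
        intro z hz h; obtain ⟨hz1, hz2⟩ := hz; linarith
      have c2 : ContinuousOn (fun z : ℝ => Real.log (1 - z)) (Ico (0:ℝ) 1) := by
        apply ContinuousOn.log (by fun_prop)
        intro z hz h; obtain ⟨hz1, hz2⟩ := hz; linarith
      exact (continuousOn_const.mul (c1.sub c2)).sub (by fun_prop)
    · intro z hz
      rw [interior_Ico] at hz
      exact (hd z hz.1 hz.2).differentiableAt.differentiableWithinAt
    · intro z hz
      rw [interior_Ico] at hz
      rw [(hd z hz.1 hz.2).deriv]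
      have ha : (0:ℝ) < 1 + z := by linarith [hz.1]
      have hb : (0:ℝ) < 1 - z := by linarith [hz.2]
      have heq : 1 / 2 * (1 / (1 + z) + 1 / (1 - z)) - (1 + z ^ 2)
          = z ^ 4 / ((1 + z) * (1 - z)) := by
        field_simp; try ring
      rw [heq]
      positivity
  have h00 : f 0 = 0 := by norm_num [hf]
  have := hmono (mem_Ico.2 ⟨le_refl 0, by norm_num⟩) (mem_Ico.2 ⟨h0, h1⟩) h0
  rw [h00] at this
  simp only [hf] at this
  linarith

lemma key_ineq {x : ℝ} (h0 : 0 ≤ x) (h1 : x < 1) :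
    x ^ 2 / 2 + x ^ 4 / 12 ≤
      (1 + x) / 2 * Real.log (1 + x) + (1 - x) / 2 * Real.log (1 - x) := by
  set f : ℝ → ℝ := fun y =>
    (1 + y) / 2 * Real.log (1 + y) + (1 - y) / 2 * Real.log (1 - y)
      - (y ^ 2 / 2 + y ^ 4 / 12) with hf
  have hd : ∀ y : ℝ, 0 < y → y < 1 →
      HasDerivAt f (1 / 2 * (Real.log (1 + y) - Real.log (1 - y)) - (y + y ^ 3 / 3)) y := by
    intro y hy hy1
    have h1 : HasDerivAt (fun z : ℝ => 1 + z) 1 y := by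
      simpa using (hasDerivAt_id y).const_add 1
    have h2 : HasDerivAt (fun z : ℝ => 1 - z) (-1) y := by
      simpa using (hasDerivAt_id y).const_sub 1
    have hlog1 : HasDerivAt (fun z : ℝ => Real.log (1 + z)) (1 / (1 + y)) y := by
      simpa using h1.log (by linarith)
    have hlog2 : HasDerivAt (fun z : ℝ => Real.log (1 - z)) (-1 / (1 - y)) y := by
      simpa using h2.log (by intro h; linarith)
    have hm1 : HasDerivAt (fun z : ℝ => (1 + z) / 2 * Real.log (1 + z))
        (1 / 2 * Real.log (1 + y) + (1 + y) / 2 * (1 / (1 + y))) y :=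
      (h1.div_const 2).mul hlog1
    have hm2 : HasDerivAt (fun z : ℝ => (1 - z) / 2 * Real.log (1 - z))
        (-1 / 2 * Real.log (1 - y) + (1 - y) / 2 * (-1 / (1 - y))) y :=
      (h2.div_const 2).mul hlog2
    have hpoly : HasDerivAt (fun z : ℝ => z ^ 2 / 2 + z ^ 4 / 12) (y + y ^ 3 / 3) y := by
      have := ((hasDerivAt_pow 2 y).div_const 2).add ((hasDerivAt_pow 4 y).div_const 12)
      refine this.congr_deriv ?_; ring
    have := (hm1.add hm2).sub hpoly
    have ha : (0:ℝ) < 1 + y := by linarith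
    have hb : (0:ℝ) < 1 - y := by linarith
    refine this.congr_deriv ?_
    field_simp
    ring
  have hmono : MonotoneOn f (Ico (0 : ℝ) 1) := by
    apply monotoneOn_of_deriv_nonneg (convex_Ico 0 1)
    · have c1 : ContinuousOn (fun z : ℝ => Real.log (1 + z)) (Ico (0:ℝ) 1) := by
        apply ContinuousOn.log (by fun_prop)
        intro z hz h; obtain ⟨hz1, hz2⟩ := hz; linarith
      have c2 : ContinuousOn (fun z : ℝ => Real.log (1 - z)) (Ico (0:ℝ) 1) := by
        apply ContinuousOn.log (by fun_prop)
        intro z hz h; obtain ⟨hz1, hz2⟩ := hz; linarith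
      exact (((ContinuousOn.mul (by fun_prop) c1).add
        (ContinuousOn.mul (by fun_prop) c2)).sub (by fun_prop))
    · intro z hz
      rw [interior_Ico] at hz
      exact (hd z hz.1 hz.2).differentiableAt.differentiableWithinAt
    · intro z hz
      rw [interior_Ico] at hz
      rw [(hd z hz.1 hz.2).deriv]
      have := artanh_ge (le_of_lt hz.1) hz.2
      linarith
  have h00 : f 0 = 0 := by norm_num [hf]
  have := hmono (mem_Ico.2 ⟨le_refl 0, by norm_num⟩) (mem_Ico.2 ⟨h0, h1⟩) h0
  rw [h00] at this
  simp only [hf] at this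
  linarith

/-- Theorem 2.9: for every `M > 1`, `α > 1`, `0 < β < 1`, the Bradley–Terry
`M`-sensitive area exceeds the `K`-tuple Plackett–Luce `M`-sensitive area. -/
theorem stmt_16 (M α β : ℝ) (hM : 1 < M) (hα : 1 < α) (hβ0 : 0 < β) (hβ1 : β < 1) :
    1 / 2 * Real.log ((M - 1) / (M + 1)) +
        1 / (2 * Real.sqrt M) * Real.log ((Real.sqrt M + 1) / (Real.sqrt M - 1)) >
      β ^ 2 / (6 * α * M ^ 2) := by
  set s := Real.sqrt M with hs
  have hM0 : (0:ℝ) < M := by linarith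
  have hs1 : 1 < s := by
    rw [hs, show (1:ℝ) = Real.sqrt 1 by simp]
    exact Real.sqrt_lt_sqrt (by norm_num) hM
  have hs0 : 0 < s := by linarith
  have hsM : s ^ 2 = M := Real.sq_sqrt hM0.le
  set x := 1 / s with hx
  have hx0 : 0 < x := by positivity
  have hx1 : x < 1 := by rw [hx, div_lt_one hs0]; exact hs1
  have hrw : 1 / 2 * Real.log ((M - 1) / (M + 1)) +
        1 / (2 * s) * Real.log ((s + 1) / (s - 1)) =
      (1 + x) / 2 * Real.log (1 + x) + (1 - x) / 2 * Real.log (1 - x)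
        - 1 / 2 * Real.log (1 + x ^ 2) := by
    have hsm1 : (0:ℝ) < s - 1 := by linarith
    have h1x : 1 + x = (s + 1) / s := by rw [hx]; field_simp
    have h2x : 1 - x = (s - 1) / s := by rw [hx]; field_simp
    have h3x : 1 + x ^ 2 = (M + 1) / M := by
      rw [hx, ← hsM]; field_simp; try ring
    have hM1 : M - 1 = (s - 1) * (s + 1) := by rw [← hsM]; ring
    rw [h1x, h2x, h3x, hM1,
      Real.log_div (by positivity) (by positivity),
      Real.log_div (by positivity) (by positivity),
      Real.log_div (by positivity) (by positivity),
      Real.log_div (by positivity) (by positivity),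
      Real.log_div (by positivity) (by positivity),
      Real.log_mul (by positivity) (by positivity)]
    have hlM : Real.log M = 2 * Real.log s := by
      rw [← hsM, Real.log_pow]; try norm_num
    rw [hlM]
    field_simp
    ring
  rw [hrw]
  have h1 := key_ineq hx0.le hx1
  have h2 := log_le_cubic (t := x ^ 2) (by positivity)
  rw [show ((x:ℝ) ^ 2) ^ 2 = x ^ 4 from by ring, show ((x:ℝ) ^ 2) ^ 3 = x ^ 6 from by ring] at h2
  have hx6 : x ^ 6 ≤ x ^ 4 := by
    calc x ^ 6 = x ^ 4 * x ^ 2 := by ring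
      _ ≤ x ^ 4 * 1 := by
          have hx2 : x ^ 2 ≤ 1 := by nlinarith
          exact mul_le_mul_of_nonneg_left hx2 (pow_nonneg hx0.le 4)
      _ = x ^ 4 := by ring
  have hgx : (1 + x) / 2 * Real.log (1 + x) + (1 - x) / 2 * Real.log (1 - x)
      - 1 / 2 * Real.log (1 + x ^ 2) ≥ x ^ 4 / 6 := by
    linarith
  have hx4 : x ^ 4 = 1 / M ^ 2 := by
    rw [hx, ← hsM]; field_simp; try ring
  have hrhs : β ^ 2 / (6 * α * M ^ 2) < x ^ 4 / 6 := by
    have hxe : x ^ 4 / 6 = 1 / (6 * M ^ 2) := by rw [hx4]; ring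
    rw [hxe, div_lt_div_iff₀ (by positivity) (by positivity)]
    have hβ2 : β ^ 2 < 1 := by nlinarith
    have hMM : (0:ℝ) < M ^ 2 := by positivity
    nlinarith [mul_lt_mul_of_pos_right hβ2 (show (0:ℝ) < 6 * M ^ 2 by positivity),
      mul_lt_mul_of_pos_right hα (show (0:ℝ) < 6 * M ^ 2 by positivity)]
  linarith
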